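/- Fix real numbers λ > 0 and N0 > 0. For P̄ > 0, set N(P̄) = λ·P̄/(4π·N0) and define C̄(P̄) = π · [ log(1 + λ·N(P̄))/λ² + N(P̄)²·log( N(P̄)·λ/(1 + N(P̄)·λ) ) + N(P̄)/λ ]. Then lim_{P̄→∞} C̄(P̄)/log(P̄/N0) = π/λ². -/

import Mathlib

open Real Filter

lemma g_lower (x : ℝ) (hx : 0 < x) :
    0 ≤ x ^ 2 * Real.log (x / (1 + x)) + x := by
  have h1x : (0:ℝ) < 1 + x := by linarith
  have h := Real.log_le_sub_one_of_pos (x := (1 + x) / x) (by positivity)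
  have hlog : Real.log (x / (1 + x)) = - Real.log ((1 + x) / x) := by
    rw [← Real.log_inv]
    congr 1
    field_simp
  rw [hlog]
  have h2 : (1 + x) / x - 1 = 1 / x := by field_simp; ring
  rw [h2] at h
  have h3 : x ^ 2 * Real.log ((1 + x) / x) ≤ x ^ 2 * (1 / x) :=
    mul_le_mul_of_nonneg_left h (sq_nonneg x)
  have h4 : x ^ 2 * (1 / x) = x := by field_simp [pow_two]
  nlinarith

lemma g_upper (x : ℝ) (hx : 0 < x) :
    x ^ 2 * Real.log (x / (1 + x)) + x ≤ 1 := by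
  have h1x : (0:ℝ) < 1 + x := by linarith
  have h := Real.log_le_sub_one_of_pos (x := x / (1 + x)) (by positivity)
  have h2 : x / (1 + x) - 1 = -(1 / (1 + x)) := by field_simp; ring
  rw [h2] at h
  have h3 : x ^ 2 * Real.log (x / (1 + x)) ≤ x ^ 2 * (-(1 / (1 + x))) :=
    mul_le_mul_of_nonneg_left h (sq_nonneg x)
  have h4 : x ^ 2 * (-(1 / (1 + x))) + x = x / (1 + x) := by field_simp; ring
  have h5 : x / (1 + x) ≤ 1 := by
    rw [div_le_one h1x]; linarith
  linarith

/-- Property 2 of the paper: the high-SNR slope of the closed-form space-normalized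
capacity of the two-dimensional deployment (Eq. (22), with `N(P̄) = λP̄/(4πN0)`) equals
`π/λ²`, i.e. `π` independent signal-space dimensions per `λ²` of deployed surface. -/
theorem signal_dimensions_2D (lam N0 : ℝ) (hlam : 0 < lam) (hN0 : 0 < N0) :
    Tendsto (fun Pbar : ℝ =>
        (π * (Real.log (1 + lam * (lam * Pbar / (4 * π * N0))) / lam ^ 2
          + (lam * Pbar / (4 * π * N0)) ^ 2 *
              Real.log ((lam * Pbar / (4 * π * N0)) * lam / (1 + (lam * Pbar / (4 * π * N0)) * lam))
          + (lam * Pbar / (4 * π * N0)) / lam))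
          / Real.log (Pbar / N0))
      atTop (nhds (π / lam ^ 2)) := by
  have hpi := Real.pi_pos
  set c : ℝ := lam ^ 2 / (4 * π * N0) with hc_def
  have hc : 0 < c := by positivity
  set D : ℝ → ℝ := fun P => Real.log (P / N0) with hD_def
  -- D tends to atTop
  have hD : Tendsto D atTop atTop := by
    apply Real.tendsto_log_atTop.comp
    exact Tendsto.atTop_div_const hN0 tendsto_id
  -- h := log(1+cP) - D tends to log (c*N0)
  have hh : Tendsto (fun P => Real.log (1 + c * P) - D P) atTop (nhds (Real.log (c * N0))) := by
    have h1 : Tendsto (fun P : ℝ => N0 / P + c * N0) atTop (nhds (c * N0)) := by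
      have := Tendsto.div_atTop (tendsto_const_nhds (x := N0)) (tendsto_id (α := ℝ))
      simpa using this.add tendsto_const_nhds
    have h2 : Tendsto (fun P : ℝ => Real.log (N0 / P + c * N0)) atTop
        (nhds (Real.log (c * N0))) :=
      (Real.continuousAt_log (by positivity)).tendsto.comp h1
    apply h2.congr'
    filter_upwards [eventually_gt_atTop 0] with P hP
    have hP1 : (0:ℝ) < 1 + c * P := by positivity
    rw [show D P = Real.log (P / N0) from rfl,
        ← Real.log_div (ne_of_gt hP1) (by positivity)]
    congr 1
    field_simp
  -- ratio log(1+cP)/D → 1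
  have hr : Tendsto (fun P => Real.log (1 + c * P) / D P) atTop (nhds 1) := by
    have h0 : Tendsto (fun P => (Real.log (1 + c * P) - D P) / D P) atTop (nhds 0) :=
      Tendsto.div_atTop hh hD
    have h1 : Tendsto (fun P => (Real.log (1 + c * P) - D P) / D P + 1) atTop (nhds 1) := by
      simpa using h0.add tendsto_const_nhds
    apply h1.congr'
    filter_upwards [hD.eventually_ge_atTop 1] with P hP
    have hDne : D P ≠ 0 := by linarith
    field_simp
    ring
  -- bounded remainder / D → 0
  have hF2 : Tendsto (fun P => (π / lam ^ 2) *
      (((c * P) ^ 2 * Real.log ((c * P) / (1 + c * P)) + c * P) / D P)) atTop (nhds 0) := by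
    have hub : Tendsto (fun P => (π / lam ^ 2) / D P) atTop (nhds 0) :=
      Tendsto.div_atTop tendsto_const_nhds hD
    apply tendsto_of_tendsto_of_tendsto_of_le_of_le' tendsto_const_nhds hub
    · filter_upwards [eventually_gt_atTop 0, hD.eventually_ge_atTop 1] with P hP hDP
      have hx : 0 < c * P := by positivity
      have := g_lower (c * P) hx
      positivity
    · filter_upwards [eventually_gt_atTop 0, hD.eventually_ge_atTop 1] with P hP hDP
      have hx : 0 < c * P := by positivity
      have hg1 := g_upper (c * P) hx
      have hg0 := g_lower (c * P) hx
      have hDpos : 0 < D P := by linarith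
      have hstep : (π / lam ^ 2) *
          (((c * P) ^ 2 * Real.log ((c * P) / (1 + c * P)) + c * P) / D P)
          ≤ (π / lam ^ 2) * (1 / D P) := by
        gcongr
      calc (π / lam ^ 2) *
          (((c * P) ^ 2 * Real.log ((c * P) / (1 + c * P)) + c * P) / D P)
          ≤ (π / lam ^ 2) * (1 / D P) := hstep
        _ = (π / lam ^ 2) / D P := by ring
  -- combine
  have hmain : Tendsto (fun P => (π / lam ^ 2) * (Real.log (1 + c * P) / D P)
      + (π / lam ^ 2) *
        (((c * P) ^ 2 * Real.log ((c * P) / (1 + c * P)) + c * P) / D P)) atTop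
      (nhds (π / lam ^ 2)) := by
    have := (hr.const_mul (π / lam ^ 2)).add hF2
    simpa using this
  apply hmain.congr
  intro P
  have hlam2 : lam ^ 2 ≠ 0 := by positivity
  have hpiN : (4 * π * N0) ≠ 0 := by positivity
  have e1 : lam * (lam * P / (4 * π * N0)) = c * P := by
    rw [hc_def]; field_simp
  have e2 : (lam * P / (4 * π * N0)) * lam = c * P := by
    rw [hc_def]; field_simp
  have e3 : lam * P / (4 * π * N0) = c * P / lam := by
    rw [hc_def]; field_simp
  rw [e1, e2, e3]
  simp only [hD_def]
  rcases eq_or_ne (Real.log (P / N0)) 0 with h | h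
  · simp [h]
  · field_simp
    ring
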